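/- Let 𝒜 = {y ∈ ℝ^m : A_i·y − α_i ≥ 0 for i = 1,…,r and B_j·y − β_j > 0 for j = 1,…,s} be a nonempty set defined by finitely many affine inequalities, and let ℬ ⊆ ℝ^m be a nonempty closed convex set with 𝒜 ∩ ℬ = ∅. If there is no affine function L : ℝ^m → ℝ with L(y) > 0 for all y ∈ 𝒜 and L(y) ≤ 0 for all y ∈ ℬ, then there exist an affine function L₀ : ℝ^m → ℝ that is not identically zero and real numbers δ₁,…,δ_r ≥ 0 such that L₀(y) = Σ_{i=1}^r δ_i (A_i·y − α_i) for all y ∈ ℝ^m, and L₀(y) ≤ 0 for all y ∈ ℬ. -/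

import Mathlib

open Matrix Topology


lemma simplicial_cone_closed {E : Type*} [NormedAddCommGroup E] [NormedSpace ℝ E]
    {ι : Type*} [Fintype ι] {v : ι → E} (hv : LinearIndependent ℝ v) :
    IsClosed {x : E | ∃ lam : ι → ℝ, (∀ i, 0 ≤ lam i) ∧ x = ∑ i, lam i • v i} := by
  classical
  set T : (ι → ℝ) →ₗ[ℝ] E :=
    { toFun := fun lam => ∑ i, lam i • v i
      map_add' := by
        intro a b
        simp [add_smul, Finset.sum_add_distrib]
      map_smul' := by
        intro c a
        simp [smul_smul, Finset.smul_sum] } with hT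
  have hker : LinearMap.ker T = ⊥ := by
    rw [LinearMap.ker_eq_bot']
    intro lam hlam
    have := Fintype.linearIndependent_iff.mp hv lam hlam
    funext i; exact this i
  have hemb : IsClosedEmbedding T := T.isClosedEmbedding_of_injective hker
  have horth : IsClosed {lam : ι → ℝ | ∀ i, 0 ≤ lam i} := by
    have : {lam : ι → ℝ | ∀ i, 0 ≤ lam i} = ⋂ i, {lam | 0 ≤ lam i} := by
      ext lam; simp
    rw [this]
    exact isClosed_iInter fun i => isClosed_le continuous_const (continuous_apply i)
  have himg : {x : E | ∃ lam : ι → ℝ, (∀ i, 0 ≤ lam i) ∧ x = ∑ i, lam i • v i}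
      = T '' {lam : ι → ℝ | ∀ i, 0 ≤ lam i} := by
    ext x
    constructor
    · rintro ⟨lam, h1, rfl⟩; exact ⟨lam, h1, rfl⟩
    · rintro ⟨lam, h1, rfl⟩; exact ⟨lam, h1, rfl⟩
  rw [himg]
  exact hemb.isClosedMap _ horth


lemma sum_support_subset {E : Type*} [AddCommGroup E] [Module ℝ E]
    {ι : Type*} [Fintype ι] (x : ι → E) (T : Finset ι) (mu : ι → ℝ)
    (hsupp : ∀ k ∉ T, mu k = 0) :
    ∑ k, mu k • x k = ∑ k : T, mu k • x k := by
  rw [Finset.sum_coe_sort T (fun k => mu k • x k)]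
  exact (Finset.sum_subset (Finset.subset_univ T)
    (by intro k _ h; simp [hsupp k h])).symm

lemma cone_caratheodory {E : Type*} [AddCommGroup E] [Module ℝ E]
    {ι : Type*} [Fintype ι] [DecidableEq ι] (x : ι → E) (S : Finset ι) (lam : ι → ℝ)
    (hlam : ∀ k, 0 ≤ lam k) (hsupp : ∀ k ∉ S, lam k = 0) :
    ∃ T : Finset ι, LinearIndependent ℝ (fun k : T => x k) ∧
      ∃ mu : ι → ℝ, (∀ k, 0 ≤ mu k) ∧ (∀ k ∉ T, mu k = 0) ∧
        ∑ k, mu k • x k = ∑ k, lam k • x k := by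
  classical
  induction S using Finset.strongInduction generalizing lam with
  | _ S ih =>
  by_cases hindep : LinearIndependent ℝ (fun k : S => x k)
  · exact ⟨S, hindep, lam, hlam, hsupp, rfl⟩
  · obtain ⟨g, hg0, i0, hgi0⟩ := Fintype.not_linearIndependent_iff.mp hindep
    have key : ∀ gh : ι → ℝ, (∀ k ∉ S, gh k = 0) → ∑ k, gh k • x k = 0 →
        (∃ k, 0 < gh k) →
        ∃ T : Finset ι, LinearIndependent ℝ (fun k : T => x k) ∧
          ∃ mu : ι → ℝ, (∀ k, 0 ≤ mu k) ∧ (∀ k ∉ T, mu k = 0) ∧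
            ∑ k, mu k • x k = ∑ k, lam k • x k := by
      rintro gh ghsupp ghsum ⟨kp, hkp⟩
      set P : Finset ι := S.filter (fun k => 0 < gh k) with hP
      have hPne : P.Nonempty := by
        refine ⟨kp, Finset.mem_filter.mpr ⟨?_, hkp⟩⟩
        by_contra h
        rw [ghsupp kp h] at hkp; exact lt_irrefl 0 hkp
      obtain ⟨k₀, hk₀P, hk₀min⟩ := Finset.exists_min_image P (fun k => lam k / gh k) hPne
      have hk₀S : k₀ ∈ S := (Finset.mem_filter.mp hk₀P).1
      have hghk₀ : 0 < gh k₀ := (Finset.mem_filter.mp hk₀P).2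
      set t : ℝ := lam k₀ / gh k₀ with ht
      have ht0 : 0 ≤ t := div_nonneg (hlam k₀) hghk₀.le
      set lam' : ι → ℝ := fun k => lam k - t * gh k with hlam'
      have hlam'0 : ∀ k, 0 ≤ lam' k := by
        intro k
        by_cases hkP : k ∈ P
        · have hghk : 0 < gh k := (Finset.mem_filter.mp hkP).2
          have h1 := hk₀min k hkP
          have h2 : t * gh k ≤ lam k := by
            rw [← le_div_iff₀ hghk]; exact h1
          simpa [hlam'] using sub_nonneg.mpr h2
        · have hghk : gh k ≤ 0 := by
            by_cases hkS : k ∈ S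
            · by_contra h
              exact hkP (Finset.mem_filter.mpr ⟨hkS, lt_of_not_ge h⟩)
            · rw [ghsupp k hkS]
          have h3 : t * gh k ≤ 0 := mul_nonpos_of_nonneg_of_nonpos ht0 hghk
          have h4 := hlam k
          simp only [hlam']; linarith
      have hlam'supp : ∀ k ∉ S.erase k₀, lam' k = 0 := by
        intro k hk
        rw [Finset.mem_erase] at hk
        push_neg at hk
        by_cases hkk : k = k₀
        · subst hkk
          simp only [hlam', ht]
          rw [div_mul_cancel₀ (lam k) (ne_of_gt hghk₀), sub_self]
        · have e1 := hsupp k (hk hkk)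
          have e2 := ghsupp k (hk hkk)
          simp [hlam', e1, e2]
      have hsum : ∑ k, lam' k • x k = ∑ k, lam k • x k := by
        have : ∑ k, lam' k • x k = ∑ k, lam k • x k - t • ∑ k, gh k • x k := by
          rw [Finset.smul_sum, ← Finset.sum_sub_distrib]
          refine Finset.sum_congr rfl fun k _ => ?_
          simp [hlam', sub_smul, smul_smul]
        rw [this, ghsum, smul_zero, sub_zero]
      obtain ⟨T, hT, mu, h1, h2, h3⟩ :=
        ih (S.erase k₀) (Finset.erase_ssubset hk₀S) lam' hlam'0 hlam'supp
      exact ⟨T, hT, mu, h1, h2, h3.trans hsum⟩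
    set gh : ι → ℝ := fun k => if h : k ∈ S then g ⟨k, h⟩ else 0 with hgh
    have ghsupp : ∀ k ∉ S, gh k = 0 := fun k hk => dif_neg hk
    have ghsum : ∑ k, gh k • x k = 0 := by
      rw [sum_support_subset x S gh ghsupp, ← hg0]
      refine Finset.sum_congr rfl fun k _ => ?_
      simp [hgh]
    have ghi0 : gh ↑i0 ≠ 0 := by simpa [hgh] using hgi0
    rcases lt_or_gt_of_ne ghi0 with hneg | hpos
    · refine key (fun k => - gh k) (fun k hk => by simp [ghsupp k hk]) ?_
        ⟨i0, by simpa using hneg⟩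
      have h5 : ∑ k, (fun k => - gh k) k • x k = -∑ k, gh k • x k := by
        rw [← Finset.sum_neg_distrib]
        exact Finset.sum_congr rfl fun k _ => by rw [neg_smul]
      rw [h5, ghsum, neg_zero]
    · exact key gh ghsupp ghsum ⟨i0, hpos⟩

lemma fg_cone_closed {E : Type*} [NormedAddCommGroup E] [NormedSpace ℝ E]
    {ι : Type*} [Fintype ι] [DecidableEq ι] (x : ι → E) :
    IsClosed {v : E | ∃ lam : ι → ℝ, (∀ k, 0 ≤ lam k) ∧ v = ∑ k, lam k • x k} := by
  classical
  have heq : {v : E | ∃ lam : ι → ℝ, (∀ k, 0 ≤ lam k) ∧ v = ∑ k, lam k • x k}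
      = ⋃ T : Finset ι, {v : E | LinearIndependent ℝ (fun k : T => x k) ∧
          ∃ nu : T → ℝ, (∀ k, 0 ≤ nu k) ∧ v = ∑ k : T, nu k • x k} := by
    ext v
    simp only [Set.mem_setOf_eq, Set.mem_iUnion]
    constructor
    · rintro ⟨lam, h0, rfl⟩
      obtain ⟨T, hT, mu, hmu0, hmusupp, hmusum⟩ :=
        cone_caratheodory x Finset.univ lam h0 (by simp)
      refine ⟨T, hT, fun k => mu k, fun k => hmu0 k, ?_⟩
      rw [← hmusum, sum_support_subset x T mu hmusupp]
    · rintro ⟨T, _, nu, hnu0, rfl⟩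
      refine ⟨fun k => if h : k ∈ T then nu ⟨k, h⟩ else 0, ?_, ?_⟩
      · intro k
        by_cases h : k ∈ T
        · simpa [h] using hnu0 ⟨k, h⟩
        · simp [h]
      · rw [sum_support_subset x T _ (fun k hk => dif_neg hk)]
        exact Finset.sum_congr rfl fun k _ => by simp
  rw [heq]
  refine isClosed_iUnion_of_finite fun T => ?_
  by_cases hT : LinearIndependent ℝ (fun k : T => x k)
  · have : {v : E | LinearIndependent ℝ (fun k : T => x k) ∧
        ∃ nu : T → ℝ, (∀ k, 0 ≤ nu k) ∧ v = ∑ k : T, nu k • x k}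
        = {v : E | ∃ nu : T → ℝ, (∀ k, 0 ≤ nu k) ∧ v = ∑ k : T, nu k • x k} := by
      ext v; simp [hT]
    rw [this]
    exact simplicial_cone_closed hT
  · have : {v : E | LinearIndependent ℝ (fun k : T => x k) ∧
        ∃ nu : T → ℝ, (∀ k, 0 ≤ nu k) ∧ v = ∑ k : T, nu k • x k} = ∅ := by
      ext v; simp [hT]
    rw [this]
    exact isClosed_empty

lemma fg_cone_convex {E : Type*} [AddCommGroup E] [Module ℝ E]
    {ι : Type*} [Fintype ι] (x : ι → E) :
    Convex ℝ {v : E | ∃ lam : ι → ℝ, (∀ k, 0 ≤ lam k) ∧ v = ∑ k, lam k • x k} := by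
  rintro v ⟨lam, hlam, rfl⟩ w ⟨mu, hmu, rfl⟩ a b ha hb _
  refine ⟨fun k => a * lam k + b * mu k,
    fun k => add_nonneg (mul_nonneg ha (hlam k)) (mul_nonneg hb (hmu k)), ?_⟩
  rw [Finset.smul_sum, Finset.smul_sum, ← Finset.sum_add_distrib]
  exact Finset.sum_congr rfl fun k _ => by rw [add_smul, smul_smul, smul_smul]



lemma lin_eq_dot {m : ℕ} (φ : (Fin m → ℝ) →L[ℝ] ℝ) (y : Fin m → ℝ) :
    φ y = (fun i => φ (Pi.single i 1)) ⬝ᵥ y := by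
  have hsingle : ∀ i : Fin m, (fun j => if i = j then (1:ℝ) else 0) = Pi.single i 1 := by
    intro i; funext j; simp [Pi.single_apply, eq_comm]
  conv_lhs => rw [pi_eq_sum_univ y]
  rw [map_sum]
  have hterm : ∀ i : Fin m, φ (y i • (fun j => if i = j then (1:ℝ) else 0))
      = y i * φ (Pi.single i 1) := by
    intro i; rw [hsingle, _root_.map_smul, smul_eq_mul]
  rw [Finset.sum_congr rfl (fun i _ => hterm i)]
  simp only [dotProduct]
  exact Finset.sum_congr rfl fun i _ => mul_comm _ _

lemma affine_farkas {m : ℕ} {ι : Type*} [Fintype ι] [DecidableEq ι]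
    (M : ι → Fin m → ℝ) (b : ι → ℝ) (c : Fin m → ℝ) (c₀ : ℝ)
    (hne : ∃ y, ∀ i, b i ≤ M i ⬝ᵥ y)
    (h : ∀ y : Fin m → ℝ, (∀ i, b i ≤ M i ⬝ᵥ y) → 0 ≤ c ⬝ᵥ y + c₀) :
    ∃ δ : ι → ℝ, (∀ i, 0 ≤ δ i) ∧ ∃ δ₀ : ℝ, 0 ≤ δ₀ ∧
      c = ∑ i, δ i • M i ∧ c₀ = δ₀ - ∑ i, δ i * b i := by
  classical
  set E := (Fin m → ℝ) × ℝ
  set g : Option ι → E := fun k => Option.elim k ((0 : Fin m → ℝ), (1:ℝ))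
    (fun i => (M i, - b i)) with hg
  set C : Set E := {v : E | ∃ lam : Option ι → ℝ, (∀ k, 0 ≤ lam k) ∧ v = ∑ k, lam k • g k}
    with hC
  have hmem : (c, c₀) ∈ C := by
    by_contra hc
    obtain ⟨f, u, hfu, hub⟩ :=
      geometric_hahn_banach_point_closed (fg_cone_convex g) (fg_cone_closed g) hc
    have h0C : (0 : E) ∈ C := ⟨0, fun k => le_rfl, by simp⟩
    have hu0 : u < 0 := by simpa using hub _ h0C
    have hfnn : ∀ z ∈ C, 0 ≤ f z := by
      intro z hz
      by_contra hfz
      push_neg at hfz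
      obtain ⟨lam, hlam0, rfl⟩ := hz
      have hsz : ∀ s : ℝ, 0 ≤ s → s • ∑ k, lam k • g k ∈ C := by
        intro s hs
        refine ⟨fun k => s * lam k, fun k => mul_nonneg hs (hlam0 k), ?_⟩
        rw [Finset.smul_sum]
        exact Finset.sum_congr rfl fun k _ => by rw [smul_smul]
      set z := ∑ k, lam k • g k
      have hs0 : (0:ℝ) ≤ 2 * u / f z := by
        rw [div_nonneg_iff]; exact Or.inr ⟨by linarith, hfz.le⟩
      have := hub _ (hsz _ hs0)
      rw [_root_.map_smul, smul_eq_mul, div_mul_cancel₀ _ (ne_of_lt hfz)] at this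
      linarith
    have hgen : ∀ k, 0 ≤ f (g k) := by
      intro k
      refine hfnn _ ⟨fun k' => if k' = k then 1 else 0, fun k' => by positivity, ?_⟩
      simp [ite_smul]
    set w : Fin m → ℝ := fun i => f (Pi.single i 1, 0) with hw
    set τ : ℝ := f (0, 1) with hτ
    have hf_eq : ∀ (y : Fin m → ℝ) (t : ℝ), f (y, t) = w ⬝ᵥ y + t * τ := by
      intro y t
      have hsplit : (y, t) = ((y, 0) : E) + t • ((0:Fin m → ℝ), (1:ℝ)) := by
        simp [Prod.ext_iff]
      rw [hsplit, map_add, _root_.map_smul, smul_eq_mul]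
      congr 1
      have := lin_eq_dot (f.comp (ContinuousLinearMap.inl ℝ (Fin m → ℝ) ℝ)) y
      exact this
    have hτ0 : 0 ≤ τ := hgen none
    have hgeni : ∀ i, 0 ≤ w ⬝ᵥ M i + (- b i) * τ := by
      intro i
      have h5 : g (some i) = (M i, - b i) := rfl
      have := hgen (some i)
      rwa [h5, hf_eq] at this
    have hfc : w ⬝ᵥ c + c₀ * τ < 0 := by
      rw [← hf_eq]; linarith
    rcases eq_or_lt_of_le hτ0 with hτeq | hτpos
    · -- τ = 0
      obtain ⟨y₁, hy₁⟩ := hne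
      have hK : 0 ≤ c ⬝ᵥ y₁ + c₀ := h y₁ hy₁
      set K := c ⬝ᵥ y₁ + c₀ with hKdef
      have hcw : c ⬝ᵥ w < 0 := by
        have := hfc
        rw [← hτeq] at this
        simpa [dotProduct_comm] using this
      set s : ℝ := (K + 1) / (- (c ⬝ᵥ w)) with hs
      have hs0 : 0 ≤ s := div_nonneg (by linarith) (by linarith)
      have hcw0 : c ⬝ᵥ w ≠ 0 := ne_of_lt hcw
      have hscw : s * (c ⬝ᵥ w) = -(K + 1) := by
        rw [hs, div_mul_eq_mul_div, mul_div_assoc, div_neg, div_self hcw0]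
        ring
      have hy : ∀ i, b i ≤ M i ⬝ᵥ (y₁ + s • w) := by
        intro i
        have h1 : 0 ≤ w ⬝ᵥ M i := by have := hgeni i; rw [← hτeq] at this; linarith
        rw [dotProduct_add, dotProduct_smul, smul_eq_mul]
        have := hy₁ i
        have h2 : 0 ≤ s * (M i ⬝ᵥ w) := mul_nonneg hs0 (by rwa [dotProduct_comm])
        linarith
      have := h _ hy
      rw [dotProduct_add, dotProduct_smul, smul_eq_mul] at this
      rw [hKdef] at hscw
      linarith [hscw]
    · -- τ > 0
      set y := τ⁻¹ • w with hy
      have hyP : ∀ i, b i ≤ M i ⬝ᵥ y := by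
        intro i
        rw [hy, dotProduct_smul, smul_eq_mul]
        have h1 := hgeni i
        rw [dotProduct_comm] at h1
        rw [← mul_le_mul_iff_right₀ hτpos, mul_comm τ (b i)]
        have : τ * (τ⁻¹ * (M i ⬝ᵥ w)) = M i ⬝ᵥ w := by
          field_simp
        rw [this]; linarith
      have := h y hyP
      rw [hy, dotProduct_smul, smul_eq_mul] at this
      have h2 : 0 ≤ τ * (τ⁻¹ * (c ⬝ᵥ w)) + τ * c₀ := by
        have := mul_le_mul_of_nonneg_left this hτpos.le
        simpa [mul_add] using this
      have h3 : τ * (τ⁻¹ * (c ⬝ᵥ w)) = c ⬝ᵥ w := by field_simp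
      rw [h3] at h2
      rw [dotProduct_comm] at hfc
      linarith
  obtain ⟨lam, hlam0, hsum⟩ := hmem
  refine ⟨fun i => lam (some i), fun i => hlam0 (some i), lam none, hlam0 none, ?_, ?_⟩
  · have h1 := congrArg Prod.fst hsum
    rw [Prod.fst_sum] at h1
    rw [Fintype.sum_option] at h1
    have e1 : ∀ k : Option ι, (lam k • g k).1 = lam k • (g k).1 := fun k => rfl
    simp only [e1] at h1
    have e2 : (g none).1 = 0 := rfl
    have e3 : ∀ i : ι, (g (some i)).1 = M i := fun i => rfl
    rw [e2, smul_zero, zero_add] at h1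
    rw [h1]
    exact Finset.sum_congr rfl fun i _ => by rw [e3]
  · have h1 := congrArg Prod.snd hsum
    rw [Prod.snd_sum] at h1
    rw [Fintype.sum_option] at h1
    have e1 : ∀ k : Option ι, (lam k • g k).2 = lam k * (g k).2 := fun k => rfl
    simp only [e1] at h1
    have e2 : (g none).2 = 1 := rfl
    have e3 : ∀ i : ι, (g (some i)).2 = - b i := fun i => rfl
    rw [e2, mul_one] at h1
    rw [h1, sub_eq_add_neg, ← Finset.sum_neg_distrib]
    congr 1
    exact Finset.sum_congr rfl fun i _ => by rw [e3]; ring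

lemma cont_pair {m : ℕ} (a : Fin m → ℝ) :
    Continuous (fun p : (Fin m → ℝ) × ℝ => p.1 ⬝ᵥ a + p.2) := by
  refine Continuous.add ?_ continuous_snd
  unfold dotProduct
  exact continuous_finset_sum _ fun i _ =>
    ((continuous_apply i).comp continuous_fst).mul continuous_const

lemma exists_weak_separation {m : ℕ} (𝒜 ℬ : Set (Fin m → ℝ))
    (h𝒜conv : Convex ℝ 𝒜) (h𝒜ne : 𝒜.Nonempty) (hℬne : ℬ.Nonempty)
    (hℬclosed : IsClosed ℬ) (hℬconvex : Convex ℝ ℬ) (hdisj : 𝒜 ∩ ℬ = ∅) :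
    ∃ (c : Fin m → ℝ) (c₀ : ℝ), ¬(c = 0 ∧ c₀ = 0) ∧
      (∀ a ∈ 𝒜, 0 ≤ c ⬝ᵥ a + c₀) ∧ (∀ y ∈ ℬ, c ⬝ᵥ y + c₀ ≤ 0) := by
  classical
  obtain ⟨a₀, ha₀⟩ := h𝒜ne
  set Z : Finset (Fin m → ℝ) → Set ((Fin m → ℝ) × ℝ) := fun F =>
    (Metric.sphere (0 : (Fin m → ℝ) × ℝ) 1 ∩
      {p | ∀ a ∈ F, a ∈ 𝒜 → 0 ≤ p.1 ⬝ᵥ a + p.2}) ∩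
      {p | ∀ y ∈ ℬ, p.1 ⬝ᵥ y + p.2 ≤ 0} with hZ
  have hZclosed : ∀ F, IsClosed (Z F) := by
    intro F
    refine IsClosed.inter (IsClosed.inter Metric.isClosed_sphere ?_) ?_
    · have : {p : (Fin m → ℝ) × ℝ | ∀ a ∈ F, a ∈ 𝒜 → 0 ≤ p.1 ⬝ᵥ a + p.2}
          = ⋂ (a : Fin m → ℝ) (_ : a ∈ F) (_ : a ∈ 𝒜), {p | 0 ≤ p.1 ⬝ᵥ a + p.2} := by
        ext p; simp
      rw [this]
      exact isClosed_iInter fun a => isClosed_iInter fun _ => isClosed_iInter fun _ =>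
        isClosed_le continuous_const (cont_pair a)
    · have : {p : (Fin m → ℝ) × ℝ | ∀ y ∈ ℬ, p.1 ⬝ᵥ y + p.2 ≤ 0}
          = ⋂ (y : Fin m → ℝ) (_ : y ∈ ℬ), {p | p.1 ⬝ᵥ y + p.2 ≤ 0} := by
        ext p; simp
      rw [this]
      exact isClosed_iInter fun y => isClosed_iInter fun _ =>
        isClosed_le (cont_pair y) continuous_const
  have hZcompact : ∀ F, IsCompact (Z F) :=
    fun F => (isCompact_sphere (0 : (Fin m → ℝ) × ℝ) 1).of_isClosed_subset
      (hZclosed F) (fun p hp => hp.1.1)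
  have hZdir : Directed (· ⊇ ·) Z := by
    intro F G
    refine ⟨F ∪ G, ?_, ?_⟩
    · rintro p ⟨⟨h1, h2⟩, h3⟩
      exact ⟨⟨h1, fun a ha h𝒜' => h2 a (Finset.mem_union_left _ ha) h𝒜'⟩, h3⟩
    · rintro p ⟨⟨h1, h2⟩, h3⟩
      exact ⟨⟨h1, fun a ha h𝒜' => h2 a (Finset.mem_union_right _ ha) h𝒜'⟩, h3⟩
  have hZne : ∀ F, (Z F).Nonempty := by
    intro F
    set s : Set (Fin m → ℝ) := convexHull ℝ (insert a₀ (↑F ∩ 𝒜)) with hs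
    have hsfin : (insert a₀ ((F : Set (Fin m → ℝ)) ∩ 𝒜)).Finite :=
      (F.finite_toSet.inter_of_left 𝒜).insert a₀
    have hscompact : IsCompact s := hsfin.isCompact_convexHull ℝ
    have hsconv : Convex ℝ s := convex_convexHull ℝ _
    have hs𝒜 : s ⊆ 𝒜 := by
      refine convexHull_min ?_ h𝒜conv
      rintro x (rfl | ⟨_, hx⟩)
      · exact ha₀
      · exact hx
    have hdisj' : Disjoint s ℬ := Set.disjoint_left.mpr fun x hx hxB =>
      (Set.eq_empty_iff_forall_notMem.mp hdisj x) ⟨hs𝒜 hx, hxB⟩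
    obtain ⟨f, u, v, hfu, huv, hfb⟩ :=
      geometric_hahn_banach_compact_closed hsconv hscompact hℬconvex hℬclosed hdisj'
    set cf : Fin m → ℝ := fun i => f (Pi.single i 1) with hcf
    set q : (Fin m → ℝ) × ℝ := (-cf, u) with hq
    have hqval : ∀ y : Fin m → ℝ, q.1 ⬝ᵥ y + q.2 = u - f y := by
      intro y
      rw [lin_eq_dot f y]
      show (-cf) ⬝ᵥ y + u = u - cf ⬝ᵥ y
      rw [neg_dotProduct]; ring
    have hqpos : ∀ a ∈ s, 0 < q.1 ⬝ᵥ a + q.2 := by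
      intro a ha; rw [hqval]; linarith [hfu a ha]
    have hqneg : ∀ y ∈ ℬ, q.1 ⬝ᵥ y + q.2 < 0 := by
      intro y hy; rw [hqval]; linarith [hfb y hy]
    have hq0 : q ≠ 0 := by
      intro h
      have h2 := hqpos a₀ (subset_convexHull ℝ _ (Set.mem_insert a₀ _))
      rw [h] at h2
      simp at h2
    have hnq : 0 < ‖q‖ := norm_pos_iff.mpr hq0
    set p : (Fin m → ℝ) × ℝ := ‖q‖⁻¹ • q with hp
    have hval : ∀ y : Fin m → ℝ, p.1 ⬝ᵥ y + p.2 = ‖q‖⁻¹ * (q.1 ⬝ᵥ y + q.2) := by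
      intro y
      rw [mul_add]
      show (‖q‖⁻¹ • q.1) ⬝ᵥ y + ‖q‖⁻¹ * q.2 = _
      rw [smul_dotProduct, smul_eq_mul]
    refine ⟨p, ⟨⟨?_, ?_⟩, ?_⟩⟩
    · rw [mem_sphere_iff_norm, sub_zero, hp, norm_smul, norm_inv, norm_norm]
      exact inv_mul_cancel₀ (ne_of_gt hnq)
    · intro a haF ha𝒜
      rw [hval]
      exact le_of_lt (mul_pos (inv_pos.mpr hnq)
        (hqpos a (subset_convexHull ℝ _ (Set.mem_insert_of_mem _ ⟨haF, ha𝒜⟩))))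
    · intro y hy
      rw [hval]
      exact mul_nonpos_of_nonneg_of_nonpos (inv_nonneg.mpr hnq.le) (hqneg y hy).le
  haveI : Nonempty (Finset (Fin m → ℝ)) := ⟨∅⟩
  obtain ⟨p, hp⟩ := IsCompact.nonempty_iInter_of_directed_nonempty_isCompact_isClosed
    Z hZdir hZne hZcompact hZclosed
  rw [Set.mem_iInter] at hp
  refine ⟨p.1, p.2, ?_, ?_, ?_⟩
  · rintro ⟨h1, h2⟩
    have := (hp ∅).1.1
    rw [mem_sphere_iff_norm, sub_zero] at this
    have hp0 : p = 0 := Prod.ext h1 h2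
    rw [hp0, norm_zero] at this
    exact one_ne_zero this.symm
  · intro a ha
    exact (hp {a}).1.2 a (Finset.mem_singleton_self a) ha
  · exact (hp ∅).2
lemma sum_dotProduct' {ι : Type*} [Fintype ι] {m : ℕ} (f : ι → Fin m → ℝ) (y : Fin m → ℝ) :
    (∑ i, f i) ⬝ᵥ y = ∑ i, f i ⬝ᵥ y := by
  simp only [dotProduct, Finset.sum_apply, Finset.sum_mul]
  exact Finset.sum_comm

/-- Separation lemma: if the nonempty set `𝒜` defined by the affine
inequalities `Aᵢ·y − αᵢ ≥ 0`, `Bⱼ·y − βⱼ > 0` and the nonempty closed convex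
set `ℬ` are disjoint, and no affine function is positive on `𝒜` and
nonpositive on `ℬ`, then some affine function `L₀ ≢ 0` that is a nonnegative
combination of the `Aᵢ·y − αᵢ` is nonpositive on `ℬ`. -/
theorem separation_nonneg_combination (m r s : ℕ)
    (A : Fin r → Fin m → ℝ) (α : Fin r → ℝ)
    (B : Fin s → Fin m → ℝ) (β : Fin s → ℝ)
    (𝒜 ℬ : Set (Fin m → ℝ))
    (h𝒜 : 𝒜 = {y | (∀ i, 0 ≤ A i ⬝ᵥ y - α i) ∧ (∀ j, 0 < B j ⬝ᵥ y - β j)})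
    (h𝒜ne : 𝒜.Nonempty) (hℬne : ℬ.Nonempty)
    (hℬclosed : IsClosed ℬ) (hℬconvex : Convex ℝ ℬ)
    (hdisj : 𝒜 ∩ ℬ = ∅)
    (hnoL : ¬ ∃ (c : Fin m → ℝ) (c₀ : ℝ),
        (∀ y ∈ 𝒜, 0 < c ⬝ᵥ y + c₀) ∧ (∀ y ∈ ℬ, c ⬝ᵥ y + c₀ ≤ 0)) :
    ∃ (c : Fin m → ℝ) (c₀ : ℝ) (δ : Fin r → ℝ),
      (∀ i, 0 ≤ δ i) ∧
      (¬ ∀ y : Fin m → ℝ, c ⬝ᵥ y + c₀ = 0) ∧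
      (∀ y : Fin m → ℝ, c ⬝ᵥ y + c₀ = ∑ i, δ i * (A i ⬝ᵥ y - α i)) ∧
      (∀ y ∈ ℬ, c ⬝ᵥ y + c₀ ≤ 0) := by
  classical
  subst h𝒜
  set 𝒜 : Set (Fin m → ℝ) :=
    {y | (∀ i, 0 ≤ A i ⬝ᵥ y - α i) ∧ (∀ j, 0 < B j ⬝ᵥ y - β j)} with h𝒜
  obtain ⟨a₀, ha₀⟩ := h𝒜ne
  obtain ⟨ha₀A, ha₀B⟩ := ha₀
  have h𝒜conv : Convex ℝ 𝒜 := by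
    rintro x ⟨hx1, hx2⟩ y ⟨hy1, hy2⟩ a b ha hb hab
    constructor
    · intro i
      have e : A i ⬝ᵥ (a • x + b • y) - α i
          = a * (A i ⬝ᵥ x - α i) + b * (A i ⬝ᵥ y - α i) := by
        rw [dotProduct_add, dotProduct_smul, dotProduct_smul, smul_eq_mul, smul_eq_mul]
        linear_combination (α i) * hab
      rw [e]
      exact add_nonneg (mul_nonneg ha (hx1 i)) (mul_nonneg hb (hy1 i))
    · intro j
      have e : B j ⬝ᵥ (a • x + b • y) - β j
          = a * (B j ⬝ᵥ x - β j) + b * (B j ⬝ᵥ y - β j) := by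
        rw [dotProduct_add, dotProduct_smul, dotProduct_smul, smul_eq_mul, smul_eq_mul]
        linear_combination (β j) * hab
      rw [e]
      rcases ha.eq_or_lt with h | h
      · have hb1 : b = 1 := by linarith
        rw [← h, hb1, zero_mul, one_mul, zero_add]
        exact hy2 j
      · exact add_pos_of_pos_of_nonneg (mul_pos h (hx2 j))
          (mul_nonneg hb (hy2 j).le)
  obtain ⟨c, c₀, hc0, h𝒜pos, hℬneg⟩ :=
    exists_weak_separation 𝒜 ℬ h𝒜conv ⟨a₀, ⟨ha₀A, ha₀B⟩⟩ hℬne hℬclosed hℬconvex hdisj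
  have hy₀ : ∃ y₀ ∈ 𝒜, c ⬝ᵥ y₀ + c₀ = 0 := by
    by_contra h
    push_neg at h
    exact hnoL ⟨c, c₀,
      fun y hy => lt_of_le_of_ne (h𝒜pos y hy) (Ne.symm (h y hy)), hℬneg⟩
  obtain ⟨y₀, hy₀𝒜, hy₀0⟩ := hy₀
  obtain ⟨hy₀A, hy₀B⟩ := hy₀𝒜
  set M : Fin r ⊕ Fin s → Fin m → ℝ := Sum.elim A B with hM
  set b : Fin r ⊕ Fin s → ℝ := Sum.elim α β with hb
  have hLa : 0 ≤ c ⬝ᵥ a₀ + c₀ := h𝒜pos a₀ ⟨ha₀A, ha₀B⟩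
  have hP : ∀ z : Fin m → ℝ, (∀ k, b k ≤ M k ⬝ᵥ z) → 0 ≤ c ⬝ᵥ z + c₀ := by
    intro z hz
    by_contra hneg
    push_neg at hneg
    have hD : 0 < (c ⬝ᵥ a₀ + c₀) - (c ⬝ᵥ z + c₀) := by linarith
    set Lz : ℝ := c ⬝ᵥ z + c₀ with hLzdef
    set La : ℝ := c ⬝ᵥ a₀ + c₀ with hLadef
    set t : ℝ := min 1 (-Lz / (2 * (La - Lz))) with htdef
    have ht0 : 0 < t := lt_min one_pos (div_pos (by linarith) (by linarith))
    have ht1 : t ≤ 1 := min_le_left _ _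
    have hmem : z + t • (a₀ - z) ∈ 𝒜 := by
      constructor
      · intro i
        have e : A i ⬝ᵥ (z + t • (a₀ - z)) = A i ⬝ᵥ z + t * (A i ⬝ᵥ a₀ - A i ⬝ᵥ z) := by
          rw [dotProduct_add, dotProduct_smul, dotProduct_sub, smul_eq_mul]
        have h1 : α i ≤ A i ⬝ᵥ z := by
          have := hz (Sum.inl i); simpa [hM, hb] using this
        have h2 := ha₀A i
        have h3 : 0 ≤ (1 - t) * (A i ⬝ᵥ z - α i) :=
          mul_nonneg (by linarith) (by linarith)
        have h4 : 0 ≤ t * (A i ⬝ᵥ a₀ - α i) := mul_nonneg ht0.le h2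
        rw [e]
        nlinarith [h3, h4]
      · intro j
        have e : B j ⬝ᵥ (z + t • (a₀ - z)) = B j ⬝ᵥ z + t * (B j ⬝ᵥ a₀ - B j ⬝ᵥ z) := by
          rw [dotProduct_add, dotProduct_smul, dotProduct_sub, smul_eq_mul]
        have h1 : β j ≤ B j ⬝ᵥ z := by
          have := hz (Sum.inr j); simpa [hM, hb] using this
        have h2 := ha₀B j
        have h3 : 0 ≤ (1 - t) * (B j ⬝ᵥ z - β j) :=
          mul_nonneg (by linarith) (by linarith)
        have h4 : 0 < t * (B j ⬝ᵥ a₀ - β j) := mul_pos ht0 h2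
        rw [e]
        nlinarith [h3, h4]
    have h5 := h𝒜pos _ hmem
    have e : c ⬝ᵥ (z + t • (a₀ - z)) + c₀ = Lz + t * (La - Lz) := by
      rw [dotProduct_add, dotProduct_smul, dotProduct_sub, smul_eq_mul,
        hLzdef, hLadef]
      ring
    rw [e] at h5
    have ht2 : t ≤ -Lz / (2 * (La - Lz)) := min_le_right _ _
    have h6 := mul_le_mul_of_nonneg_right ht2 hD.le
    have h7 : -Lz / (2 * (La - Lz)) * (La - Lz) = -Lz / 2 := by
      have hne : La - Lz ≠ 0 := by linarith
      field_simp
    rw [h7] at h6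
    clear_value t La Lz
    linarith
  obtain ⟨δ, hδ0, δ₀, hδ₀0, hc, hc₀⟩ := affine_farkas M b c c₀
    ⟨a₀, by
      intro k
      rcases k with i | j
      · have := ha₀A i; simp only [hM, hb, Sum.elim_inl]; linarith
      · have := ha₀B j; simp only [hM, hb, Sum.elim_inr]; linarith⟩ hP
  have hLy : ∀ y : Fin m → ℝ, c ⬝ᵥ y + c₀ = ∑ k, δ k * (M k ⬝ᵥ y - b k) + δ₀ := by
    intro y
    conv_lhs => rw [hc, hc₀]
    rw [sum_dotProduct']
    have e : ∀ k, (δ k • M k) ⬝ᵥ y = δ k * (M k ⬝ᵥ y) := fun k => by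
      rw [smul_dotProduct, smul_eq_mul]
    simp only [e]
    have e2 : ∑ k, δ k * (M k ⬝ᵥ y - b k)
        = ∑ k, δ k * (M k ⬝ᵥ y) - ∑ k, δ k * b k := by
      rw [← Finset.sum_sub_distrib]
      exact Finset.sum_congr rfl fun k _ => by ring
    rw [e2]
    ring
  have h0 := hLy y₀
  rw [hy₀0] at h0
  have hterm : ∀ k ∈ Finset.univ, (0:ℝ) ≤ δ k * (M k ⬝ᵥ y₀ - b k) := by
    intro k _
    rcases k with i | j
    · exact mul_nonneg (hδ0 _) (by have := hy₀A i; simp only [hM, hb, Sum.elim_inl]; linarith)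
    · exact mul_nonneg (hδ0 _) (by have := hy₀B j; simp only [hM, hb, Sum.elim_inr]; linarith)
  have hS := Finset.sum_nonneg hterm
  have hSeq : ∑ k, δ k * (M k ⬝ᵥ y₀ - b k) = 0 := by linarith
  have hδ₀eq : δ₀ = 0 := by linarith
  have hzero := (Finset.sum_eq_zero_iff_of_nonneg hterm).mp hSeq
  have hδinr : ∀ j : Fin s, δ (Sum.inr j) = 0 := by
    intro j
    have h8 := hzero (Sum.inr j) (Finset.mem_univ _)
    have h9 : M (Sum.inr j) ⬝ᵥ y₀ - b (Sum.inr j) ≠ 0 := by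
      have := hy₀B j; simp only [hM, hb, Sum.elim_inr]; linarith
    exact (mul_eq_zero.mp h8).resolve_right h9
  refine ⟨c, c₀, fun i => δ (Sum.inl i), fun i => hδ0 _, ?_, ?_, hℬneg⟩
  · intro hall
    apply hc0
    have hc₀0 : c₀ = 0 := by
      have := hall 0
      rwa [dotProduct_zero, zero_add] at this
    refine ⟨funext fun i => ?_, hc₀0⟩
    have := hall (Pi.single i 1)
    rw [dotProduct_single, mul_one, hc₀0, add_zero] at this
    exact this
  · intro y
    rw [hLy y, hδ₀eq, add_zero, Fintype.sum_sum_type]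
    have hzr : ∑ j : Fin s, δ (Sum.inr j) * (M (Sum.inr j) ⬝ᵥ y - b (Sum.inr j)) = 0 :=
      Finset.sum_eq_zero fun j _ => by rw [hδinr j, zero_mul]
    rw [hzr, add_zero]
    exact Finset.sum_congr rfl fun i _ => by
      simp only [hM, hb, Sum.elim_inl]
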